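/- Consequently, for the block-diagonal semigroup T(t) on the Hilbert space H = ⊕_{n≥2} ℂ² defined by T(t)|_{H_n} = T_n(t), one has ‖T(t) A^{-1}‖ / ‖T(t)‖ ≍ 1/t → 0 as t → ∞, even though i·1 ∈ σ(A) ∩ iℝ may be nonempty for related examples; formally: (sup_n ‖T_n(t)A_n^{-1}‖)/(sup_n ‖T_n(t)‖) ≤ C'/t for t ≥ t₀. -/

import Mathlib

open Complex

noncomputable def battyA (n : ℕ) : Matrix (Fin 2) (Fin 2) ℂ :=
  !![(n : ℂ) * I + I / n, 1; 0, (n : ℂ) * I - I / n]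

noncomputable def opNorm2 (M : Matrix (Fin 2) (Fin 2) ℂ) : ℝ :=
  ‖Matrix.toEuclideanCLM (𝕜 := ℂ) M‖

namespace BattyAux

open Matrix

lemma diag_fin_two (a d : ℂ) : Matrix.diagonal ![a, d] = !![a, 0; 0, d] := by
  ext i j
  fin_cases i <;> fin_cases j <;> simp [Matrix.diagonal]

lemma exp_upper_tri (a d b : ℂ) (h : d ≠ a) :
    NormedSpace.exp !![a, b; 0, d] =
      !![Complex.exp a, b * (Complex.exp d - Complex.exp a) / (d - a); 0, Complex.exp d] := by
  have hda : d - a ≠ 0 := sub_ne_zero.2 h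
  set P : Matrix (Fin 2) (Fin 2) ℂ := !![1, b / (d - a); 0, 1] with hP
  set Q : Matrix (Fin 2) (Fin 2) ℂ := !![1, -(b / (d - a)); 0, 1] with hQdef
  have hPQ : P * Q = 1 := by
    simp [hP, hQdef, Matrix.mul_fin_two, Matrix.one_fin_two]
  have hunit : IsUnit P := by
    have hdet : P.det = 1 := by simp [hP, Matrix.det_fin_two]
    exact (Matrix.isUnit_iff_isUnit_det P).2 (by simp [hdet])
  have hQ : P⁻¹ = Q := Matrix.inv_eq_right_inv hPQ
  have hA : !![a, b; 0, d] = P * Matrix.diagonal ![a, d] * P⁻¹ := by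
    rw [hQ, diag_fin_two]
    ext i j
    fin_cases i <;> fin_cases j <;>
      simp [hP, hQdef, Matrix.mul_fin_two] <;> field_simp <;> ring
  rw [hA, Matrix.exp_conj P _ hunit, Matrix.exp_diagonal, hQ]
  have hexp : NormedSpace.exp ![a, d] = ![Complex.exp a, Complex.exp d] := by
    ext i
    fin_cases i <;> simp [Pi.coe_exp, Complex.exp_eq_exp_ℂ]
  rw [hexp, diag_fin_two]
  ext i j
  fin_cases i <;> fin_cases j <;>
    simp [hP, hQdef, Matrix.mul_fin_two] <;> field_simp <;> ring

lemma coord_le_norm (y : EuclideanSpace ℂ (Fin 2)) (i : Fin 2) : ‖y i‖ ≤ ‖y‖ := by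
  rw [EuclideanSpace.norm_eq]
  exact Real.le_sqrt_of_sq_le
    (Finset.single_le_sum (fun j _ => sq_nonneg ‖y j‖) (Finset.mem_univ i))

lemma norm_le_coords (y : EuclideanSpace ℂ (Fin 2)) : ‖y‖ ≤ ‖y 0‖ + ‖y 1‖ := by
  rw [EuclideanSpace.norm_eq, Fin.sum_univ_two]
  have h : ‖y 0‖ ^ 2 + ‖y 1‖ ^ 2 ≤ (‖y 0‖ + ‖y 1‖) ^ 2 := by
    nlinarith [norm_nonneg (y 0), norm_nonneg (y 1)]
  calc Real.sqrt (‖y 0‖ ^ 2 + ‖y 1‖ ^ 2) ≤ Real.sqrt ((‖y 0‖ + ‖y 1‖) ^ 2) :=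
        Real.sqrt_le_sqrt h
    _ = ‖y 0‖ + ‖y 1‖ := Real.sqrt_sq (by positivity)

lemma apply_coord (M : Matrix (Fin 2) (Fin 2) ℂ) (x : EuclideanSpace ℂ (Fin 2)) (i : Fin 2) :
    (Matrix.toEuclideanCLM (𝕜 := ℂ) M x) i = M i 0 * x 0 + M i 1 * x 1 := by
  have h2 := congrFun (Matrix.ofLp_toEuclideanCLM (𝕜 := ℂ) M x) i
  simpa [Matrix.toLin'_apply, Matrix.mulVec, dotProduct, Fin.sum_univ_two] using h2

lemma entry_le_opNorm2 (M : Matrix (Fin 2) (Fin 2) ℂ) (i j : Fin 2) :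
    ‖M i j‖ ≤ opNorm2 M := by
  have h := (Matrix.toEuclideanCLM (𝕜 := ℂ) M).le_opNorm (EuclideanSpace.single j 1)
  rw [EuclideanSpace.norm_single, norm_one, mul_one] at h
  refine le_trans ?_ ((coord_le_norm _ i).trans h)
  rw [apply_coord]
  fin_cases j <;> simp [EuclideanSpace.single]

lemma opNorm2_le_of_entries (M : Matrix (Fin 2) (Fin 2) ℂ) {C : ℝ}
    (h : ∀ i j, ‖M i j‖ ≤ C) : opNorm2 M ≤ 4 * C := by
  have hC : 0 ≤ C := le_trans (norm_nonneg _) (h 0 0)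
  apply ContinuousLinearMap.opNorm_le_bound _ (by positivity)
  intro x
  set y := Matrix.toEuclideanCLM (𝕜 := ℂ) M x with hy
  have hcoord : ∀ i : Fin 2, ‖y i‖ ≤ 2 * C * ‖x‖ := by
    intro i
    rw [hy, apply_coord]
    calc ‖M i 0 * x 0 + M i 1 * x 1‖ ≤ ‖M i 0 * x 0‖ + ‖M i 1 * x 1‖ := norm_add_le _ _
      _ = ‖M i 0‖ * ‖x 0‖ + ‖M i 1‖ * ‖x 1‖ := by rw [norm_mul, norm_mul]
      _ ≤ C * ‖x‖ + C * ‖x‖ := by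
          gcongr
          · exact h i 0
          · exact coord_le_norm x 0
          · exact h i 1
          · exact coord_le_norm x 1
      _ = 2 * C * ‖x‖ := by ring
  calc ‖y‖ ≤ ‖y 0‖ + ‖y 1‖ := norm_le_coords y
    _ ≤ 2 * C * ‖x‖ + 2 * C * ‖x‖ := add_le_add (hcoord 0) (hcoord 1)
    _ = 4 * C * ‖x‖ := by ring

lemma opNorm2_le_of_four (w x y z : ℂ) {C : ℝ}
    (h1 : ‖w‖ ≤ C) (h2 : ‖x‖ ≤ C) (h3 : ‖y‖ ≤ C) (h4 : ‖z‖ ≤ C) :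
    opNorm2 !![w, x; y, z] ≤ 4 * C := by
  apply opNorm2_le_of_entries
  intro i j
  fin_cases i <;> fin_cases j
  · simpa using h1
  · simpa using h2
  · simpa using h3
  · simpa using h4

lemma abs_exp_I_sub_one (θ : ℝ) :
    ‖Complex.exp ((θ : ℂ) * I) - 1‖ = 2 * |Real.sin (θ / 2)| := by
  have hz : Complex.exp ((θ : ℂ) * I) - 1
      = ((Real.cos θ - 1 : ℝ) : ℂ) + ((Real.sin θ : ℝ) : ℂ) * I := by
    rw [Complex.exp_mul_I]
    push_cast [Complex.ofReal_cos, Complex.ofReal_sin]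
    ring
  rw [hz, Complex.norm_add_mul_I]
  have hcos : Real.cos θ = 1 - 2 * Real.sin (θ / 2) ^ 2 := by
    have h1 := Real.cos_sq (θ / 2)
    have h2 : 2 * (θ / 2) = θ := by ring
    rw [h2] at h1
    have h3 := Real.sin_sq_add_cos_sq (θ / 2)
    nlinarith
  have h4 : (Real.cos θ - 1) ^ 2 + Real.sin θ ^ 2 = (2 * |Real.sin (θ / 2)|) ^ 2 := by
    have hsin : Real.sin θ = 2 * Real.sin (θ / 2) * Real.cos (θ / 2) := by
      have h2 : 2 * (θ / 2) = θ := by ring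
      rw [← h2, Real.sin_two_mul]; rw [h2]
    have h6 := Real.sin_sq_add_cos_sq (θ / 2)
    rw [hcos, hsin]
    have h7 : (2 * |Real.sin (θ / 2)|) ^ 2 = 4 * Real.sin (θ / 2) ^ 2 := by
      rw [mul_pow, _root_.sq_abs]; ring
    rw [h7]
    nlinarith
  rw [h4, Real.sqrt_sq (by positivity)]

lemma abs_sin_le {x : ℝ} (hx : 0 ≤ x) : |Real.sin x| ≤ x := by
  nlinarith [Real.sin_sq_le_sq (x := x), _root_.sq_abs (Real.sin x),
    abs_nonneg (Real.sin x)]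

set_option maxHeartbeats 2000000 in
/-- The main per-`n` computation. -/
lemma batty_core (n : ℕ) (hn : 2 ≤ n) (t : ℝ) (ht : 0 < t) :
    opNorm2 (NormedSpace.exp ((t : ℂ) • battyA n) * (battyA n)⁻¹) ≤ 8 ∧
    opNorm2 (NormedSpace.exp ((t : ℂ) • battyA n)) ≤ 4 * (1 + t) ∧
    (n : ℝ) * |Real.sin (t / n)| ≤ opNorm2 (NormedSpace.exp ((t : ℂ) • battyA n)) := by
  have hn2 : (2 : ℝ) ≤ (n : ℝ) := by exact_mod_cast hn
  have npos : (0 : ℝ) < n := by linarith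
  have hnc : (n : ℂ) ≠ 0 := by
    exact_mod_cast Nat.cast_ne_zero.2 (by omega)
  set ra : ℝ := (n : ℝ) + 1 / n with hra_def
  set rd : ℝ := (n : ℝ) - 1 / n with hrd_def
  have hinv_n : 0 < 1 / (n : ℝ) := by positivity
  have hinv_n' : 1 / (n : ℝ) ≤ 1 / 2 := by
    rw [div_le_div_iff₀ npos (by norm_num)]; linarith
  have hra : 2 ≤ ra := by rw [hra_def]; linarith
  have hrd : 3 / 2 ≤ rd := by rw [hrd_def]; linarith
  have hrd_n : 3 / 4 * (n : ℝ) ≤ rd := by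
    rw [hrd_def]
    have : 1 / (n : ℝ) ≤ (n : ℝ) / 4 := by
      rw [div_le_div_iff₀ npos (by norm_num)]; nlinarith
    linarith
  have hra_pos : 0 < ra := lt_of_lt_of_le (by norm_num) hra
  have hrd_pos : 0 < rd := lt_of_lt_of_le (by norm_num) hrd
  set a : ℂ := (n : ℂ) * I + I / n with ha_def
  set d : ℂ := (n : ℂ) * I - I / n with hd_def
  have ha : a = (ra : ℂ) * I := by
    rw [ha_def, hra_def]; push_cast; field_simp
  have hd : d = (rd : ℂ) * I := by
    rw [hd_def, hrd_def]; push_cast; field_simp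
  have habs_a : ‖a‖ = ra := by
    rw [ha, norm_mul, Complex.norm_I, Complex.norm_real, Real.norm_eq_abs, mul_one, abs_of_pos hra_pos]
  have habs_d : ‖d‖ = rd := by
    rw [hd, norm_mul, Complex.norm_I, Complex.norm_real, Real.norm_eq_abs, mul_one, abs_of_pos hrd_pos]
  have ha0 : a ≠ 0 := by
    intro h; rw [h] at habs_a; simp at habs_a; linarith
  have hd0 : d ≠ 0 := by
    intro h; rw [h] at habs_d; simp at habs_d; linarith
  have hA_eq : battyA n = !![a, 1; 0, d] := rfl
  have hsmul : (t : ℂ) • battyA n = !![(t : ℂ) * a, (t : ℂ); 0, (t : ℂ) * d] := by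
    rw [hA_eq]
    ext i j
    fin_cases i <;> fin_cases j <;> simp
  have htc : (t : ℂ) ≠ 0 := by exact_mod_cast ofReal_ne_zero.2 ht.ne'
  have hΔ : (t : ℂ) * d - (t : ℂ) * a = ((-(2 * t / n) : ℝ) : ℂ) * I := by
    rw [ha, hd, hra_def, hrd_def]; push_cast; field_simp; ring
  have hda_ne : (t : ℂ) * d ≠ (t : ℂ) * a := by
    intro h
    have h2 : ((-(2 * t / n) : ℝ) : ℂ) * I = 0 := by
      rw [← hΔ]; exact sub_eq_zero.2 h
    rcases mul_eq_zero.1 h2 with h3 | h3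
    · have h4 : -(2 * t / (n : ℝ)) = 0 := by exact_mod_cast h3
      have : 0 < 2 * t / (n : ℝ) := by positivity
      linarith
    · exact I_ne_zero h3
  set ea : ℂ := Complex.exp ((t : ℂ) * a) with hea_def
  set ed : ℂ := Complex.exp ((t : ℂ) * d) with hed_def
  set c : ℂ := (t : ℂ) * (ed - ea) / ((t : ℂ) * d - (t : ℂ) * a) with hc_def
  have hE : NormedSpace.exp ((t : ℂ) • battyA n) = !![ea, c; 0, ed] := by
    rw [hsmul, exp_upper_tri _ _ _ hda_ne]
  have hta : (t : ℂ) * a = ((t * ra : ℝ) : ℂ) * I := by rw [ha]; push_cast; ring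
  have htd : (t : ℂ) * d = ((t * rd : ℝ) : ℂ) * I := by rw [hd]; push_cast; ring
  have habs_ea : ‖ea‖ = 1 := by
    rw [hea_def, hta, Complex.norm_exp_ofReal_mul_I]
  have habs_ed : ‖ed‖ = 1 := by
    rw [hed_def, htd, Complex.norm_exp_ofReal_mul_I]
  have hdiff : ed - ea = ea * (Complex.exp (((-(2 * t / n) : ℝ) : ℂ) * I) - 1) := by
    have key : Complex.exp ((t : ℂ) * d) = Complex.exp ((t : ℂ) * a) *
        Complex.exp ((t : ℂ) * d - (t : ℂ) * a) := by
      rw [← Complex.exp_add]; congr 1; ring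
    rw [hea_def, hed_def, ← hΔ, key]
    ring
  have habs_c : ‖c‖ = (n : ℝ) * |Real.sin (t / n)| := by
    have h1 : c = (t : ℂ) * (ea * (Complex.exp (((-(2 * t / n) : ℝ) : ℂ) * I) - 1)) /
        (((-(2 * t / n) : ℝ) : ℂ) * I) := by
      rw [hc_def, hdiff, hΔ]
    rw [h1]
    simp only [norm_div, norm_mul, habs_ea, one_mul, abs_exp_I_sub_one,
      Complex.norm_real, Real.norm_eq_abs, Complex.norm_I, mul_one]
    rw [show -(2 * t / (n : ℝ)) / 2 = -(t / n) by ring, Real.sin_neg, abs_neg,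
      abs_of_pos ht,
      show |(-(2 * t / (n : ℝ)))| = 2 * t / n by
        rw [abs_neg]; exact abs_of_pos (by positivity)]
    field_simp
  have habs_c_le_t : ‖c‖ ≤ t := by
    rw [habs_c]
    calc (n : ℝ) * |Real.sin (t / n)| ≤ (n : ℝ) * (t / n) := by
          gcongr
          exact abs_sin_le (by positivity)
      _ = t := by field_simp
  have habs_c_le_n : ‖c‖ ≤ n := by
    rw [habs_c]
    calc (n : ℝ) * |Real.sin (t / n)| ≤ (n : ℝ) * 1 := by
          gcongr
          exact Real.abs_sin_le_one _
      _ = n := mul_one _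
  -- inverse of battyA n
  have hinv : (battyA n)⁻¹ = !![1 / a, -(1 / (a * d)); 0, 1 / d] := by
    apply Matrix.inv_eq_right_inv
    rw [hA_eq]
    ext i j
    fin_cases i <;> fin_cases j <;>
      simp [Matrix.mul_fin_two, Matrix.one_fin_two] <;> field_simp <;> ring
  have hN : NormedSpace.exp ((t : ℂ) • battyA n) * (battyA n)⁻¹ =
      !![ea * (1 / a), ea * -(1 / (a * d)) + c * (1 / d); 0, ed * (1 / d)] := by
    rw [hE, hinv, Matrix.mul_fin_two]
    congr 1 <;> ring_nf
  have hnea : ‖ea‖ = 1 := by rw [habs_ea]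
  have hned : ‖ed‖ = 1 := by rw [habs_ed]
  have hna : ‖a‖ = ra := by rw [habs_a]
  have hnd : ‖d‖ = rd := by rw [habs_d]
  have hnc_t : ‖c‖ ≤ t := by exact habs_c_le_t
  have hnc_n : ‖c‖ ≤ (n : ℝ) := by exact habs_c_le_n
  clear_value ra rd a d ea ed c
  refine ⟨?_, ?_, ?_⟩
  · -- numerator bound
    rw [hN, show (8 : ℝ) = 4 * 2 by norm_num]
    apply opNorm2_le_of_four
    · simp only [norm_mul, norm_div, norm_one, hnea, hna, one_mul]
      have h1 : 1 / ra ≤ 1 / 2 := one_div_le_one_div_of_le (by norm_num) hra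
      linarith
    · have h3 : (3 : ℝ) ≤ ra * rd := by
        nlinarith [mul_le_mul hra hrd (by norm_num : (0:ℝ) ≤ 3/2) (by linarith : (0:ℝ) ≤ ra)]
      calc ‖ea * -(1 / (a * d)) + c * (1 / d)‖
          ≤ ‖ea * -(1 / (a * d))‖ + ‖c * (1 / d)‖ := norm_add_le _ _
        _ = 1 / (ra * rd) + ‖c‖ / rd := by
            simp only [norm_mul, norm_neg, norm_div, norm_one, hnea, hna, hnd, one_mul]
            ring
        _ ≤ 1 / 3 + 4 / 3 := by
            have e1 : 1 / (ra * rd) ≤ 1 / 3 := one_div_le_one_div_of_le (by norm_num) h3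
            have e2 : ‖c‖ / rd ≤ 4 / 3 := by
              have e3 : ‖c‖ / rd ≤ (n : ℝ) / rd := by gcongr
              have e4 : (n : ℝ) / rd ≤ 4 / 3 := by
                rw [div_le_div_iff₀ hrd_pos (by norm_num)]
                nlinarith [hrd_n]
              linarith
            linarith
        _ ≤ 2 := by norm_num
    · rw [norm_zero]; norm_num
    · simp only [norm_mul, norm_div, norm_one, hned, hnd, one_mul]
      have h1 : 1 / rd ≤ 1 / (3 / 2) := one_div_le_one_div_of_le (by norm_num) hrd
      linarith
  · -- denominator upper bound
    rw [hE]
    apply opNorm2_le_of_four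
    · rw [hnea]; linarith
    · linarith
    · rw [norm_zero]; linarith
    · rw [hned]; linarith
  · -- lower bound via entry (0,1)
    rw [hE]
    have h := entry_le_opNorm2 !![ea, c; 0, ed] 0 1
    have h2 : ‖(!![ea, c; 0, ed]) 0 1‖ = (n : ℝ) * |Real.sin (t / n)| := by
      rw [show (!![ea, c; 0, ed]) 0 1 = c by simp, habs_c]
    rwa [h2] at h

lemma sin_lower {t : ℝ} (ht : 2 ≤ t) :
    t / 2 ≤ (Nat.ceil t : ℝ) * |Real.sin (t / Nat.ceil t)| := by
  have ht0 : (0 : ℝ) < t := by linarith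
  have hle : t ≤ (Nat.ceil t : ℝ) := Nat.le_ceil t
  have hn0 : (0 : ℝ) < (Nat.ceil t : ℝ) := by linarith
  set x : ℝ := t / (Nat.ceil t : ℝ) with hx_def
  have hx0 : 0 < x := by positivity
  have hx1 : x ≤ 1 := by
    rw [hx_def, div_le_one hn0]; exact hle
  have hxpi : |x| ≤ Real.pi / 2 := by
    rw [abs_of_pos hx0]
    have h2pi : 2 ≤ Real.pi := Real.two_le_pi
    linarith
  have hsin := Real.mul_abs_le_abs_sin hxpi
  rw [abs_of_pos hx0] at hsin
  have hstep : (Nat.ceil t : ℝ) * (2 / Real.pi * x) ≤ (Nat.ceil t : ℝ) * |Real.sin x| := by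
    gcongr
  have heq : (Nat.ceil t : ℝ) * (2 / Real.pi * x) = 2 * t / Real.pi := by
    rw [hx_def]; field_simp
  rw [heq] at hstep
  refine le_trans ?_ hstep
  rw [div_le_div_iff₀ (by norm_num) Real.pi_pos]
  nlinarith [Real.pi_le_four]

end BattyAux

instance : Nonempty {k : ℕ // 2 ≤ k} := ⟨⟨2, le_rfl⟩⟩

/-- For the block-diagonal semigroup built from `T_n(t) = e^{tA_n}`,
`‖T(t)A⁻¹‖ / ‖T(t)‖ ≤ C'/t` eventually; formally
`(sup_{n≥2} ‖T_n(t)A_n⁻¹‖) / (sup_{n≥2} ‖T_n(t)‖) ≤ C'/t` for `t ≥ t₀`. -/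
theorem sup_ratio_le_inv_t :
    ∃ C' t₀ : ℝ, 0 < C' ∧ 0 < t₀ ∧ ∀ t : ℝ, t₀ ≤ t →
      (⨆ n : {k : ℕ // 2 ≤ k},
          opNorm2 (NormedSpace.exp ((t : ℂ) • battyA n) * (battyA n)⁻¹)) /
        (⨆ n : {k : ℕ // 2 ≤ k}, opNorm2 (NormedSpace.exp ((t : ℂ) • battyA n))) ≤
        C' / t := by
  refine ⟨16, 2, by norm_num, by norm_num, ?_⟩
  intro t ht
  have ht0 : (0 : ℝ) < t := by linarith
  have hnum : (⨆ n : {k : ℕ // 2 ≤ k},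
      opNorm2 (NormedSpace.exp ((t : ℂ) • battyA n) * (battyA n)⁻¹)) ≤ 8 :=
    ciSup_le fun n => (BattyAux.batty_core n.1 n.2 t ht0).1
  have hnum0 : 0 ≤ (⨆ n : {k : ℕ // 2 ≤ k},
      opNorm2 (NormedSpace.exp ((t : ℂ) • battyA n) * (battyA n)⁻¹)) :=
    Real.iSup_nonneg fun n => norm_nonneg _
  have hbdd : BddAbove (Set.range fun n : {k : ℕ // 2 ≤ k} =>
      opNorm2 (NormedSpace.exp ((t : ℂ) • battyA n))) := by
    refine ⟨4 * (1 + t), ?_⟩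
    rintro x ⟨n, rfl⟩
    exact (BattyAux.batty_core n.1 n.2 t ht0).2.1
  have hceil2 : 2 ≤ Nat.ceil t := by
    have h1 : t ≤ (Nat.ceil t : ℝ) := Nat.le_ceil t
    have h2 : (2 : ℝ) ≤ (Nat.ceil t : ℝ) := by linarith
    exact_mod_cast h2
  have hlow : t / 2 ≤ ⨆ n : {k : ℕ // 2 ≤ k},
      opNorm2 (NormedSpace.exp ((t : ℂ) • battyA n)) := by
    refine le_trans (BattyAux.sin_lower ht) ?_
    refine le_trans (BattyAux.batty_core (Nat.ceil t) hceil2 t ht0).2.2 ?_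
    exact le_ciSup hbdd ⟨Nat.ceil t, hceil2⟩
  calc (⨆ n : {k : ℕ // 2 ≤ k},
          opNorm2 (NormedSpace.exp ((t : ℂ) • battyA n) * (battyA n)⁻¹)) /
        (⨆ n : {k : ℕ // 2 ≤ k}, opNorm2 (NormedSpace.exp ((t : ℂ) • battyA n)))
      ≤ 8 / (t / 2) := div_le_div₀ (by norm_num) hnum (by positivity) hlow
    _ = 16 / t := by rw [div_div_eq_mul_div]; norm_num
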